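/- For a two-qubit maximally entangled state ρ₀ = |Φ⟩⟨Φ| with |Φ⟩ = (|00⟩+|11⟩)/√2 subjected to amplitude damping noise on each qubit (ρ = (E⊗E)(ρ₀) with the single-qubit amplitude damping channel E of parameter ε ∈ [0,1]), the partial transpose ρ^{T_B} has eigenvalues (1+ε²)/2, (1−ε)²/2, (1−ε²)/2, and −(1−ε)²/2, so E_N(ρ) = log₂[1 + (1−ε)²]. -/

import Mathlib

open Matrix Kronecker
open scoped ComplexOrder

/-- Trace norm ‖A‖₁ = Tr √(AᴴA). -/
noncomputable def traceNorm {n : Type*} [Fintype n] [DecidableEq n]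
    (A : Matrix n n ℂ) : ℝ :=
  (((Matrix.posSemidef_conjTranspose_mul_self A).1.eigenvectorUnitary.1 *
      diagonal (((↑) : ℝ → ℂ) ∘ Real.sqrt ∘ (Matrix.posSemidef_conjTranspose_mul_self A).1.eigenvalues) *
      (star (Matrix.posSemidef_conjTranspose_mul_self A).1.eigenvectorUnitary : Matrix n n ℂ)).trace).re

/-- Partial transpose over the B factor. -/
def ptB {a b : Type*} (M : Matrix (a × b) (a × b) ℂ) : Matrix (a × b) (a × b) ℂ :=
  Matrix.of fun p q => M (p.1, q.2) (q.1, p.2)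

/-- The two-qubit Bell state |Φ⟩⟨Φ| with |Φ⟩ = (|00⟩+|11⟩)/√2. -/
noncomputable def bell : Matrix (Fin 2 × Fin 2) (Fin 2 × Fin 2) ℂ :=
  Matrix.of fun p q => if p.1 = p.2 ∧ q.1 = q.2 then (1 / 2 : ℂ) else 0

/- ===== auxiliary machinery ===== -/

def auxE : Fin 2 × Fin 2 ≃ Fin 4 := finProdFinEquiv.trans (finCongr rfl)

@[simp] lemma auxEa : auxE 0 = 0 := rfl
@[simp] lemma auxEb : auxE (0,1) = 1 := rfl
@[simp] lemma auxEc : auxE (1,0) = 2 := rfl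
@[simp] lemma auxEd : auxE 1 = 3 := rfl
@[simp] lemma auxEa' : auxE (0,0) = 0 := rfl
@[simp] lemma auxEd' : auxE (1,1) = 3 := rfl

/-- explicit form of ρ, as a 4×4 matrix -/
noncomputable def auxR4 (ε : ℝ) : Matrix (Fin 4) (Fin 4) ℂ :=
  !![(((1+ε^2)/2 : ℝ) : ℂ), 0, 0, (((1-ε)/2 : ℝ) : ℂ);
     0, ((ε*(1-ε)/2 : ℝ) : ℂ), 0, 0;
     0, 0, ((ε*(1-ε)/2 : ℝ) : ℂ), 0;
     (((1-ε)/2 : ℝ) : ℂ), 0, 0, (((1-ε)^2/2 : ℝ) : ℂ)]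

/-- explicit form of ptB ρ -/
noncomputable def auxA4 (ε : ℝ) : Matrix (Fin 4) (Fin 4) ℂ :=
  !![(((1+ε^2)/2 : ℝ) : ℂ), 0, 0, 0;
     0, ((ε*(1-ε)/2 : ℝ) : ℂ), (((1-ε)/2 : ℝ) : ℂ), 0;
     0, (((1-ε)/2 : ℝ) : ℂ), ((ε*(1-ε)/2 : ℝ) : ℂ), 0;
     0, 0, 0, (((1-ε)^2/2 : ℝ) : ℂ)]

/-- explicit form of the absolute value |ptB ρ| -/
noncomputable def auxS4 (ε : ℝ) : Matrix (Fin 4) (Fin 4) ℂ :=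
  !![(((1+ε^2)/2 : ℝ) : ℂ), 0, 0, 0;
     0, (((1-ε)/2 : ℝ) : ℂ), ((ε*(1-ε)/2 : ℝ) : ℂ), 0;
     0, ((ε*(1-ε)/2 : ℝ) : ℂ), (((1-ε)/2 : ℝ) : ℂ), 0;
     0, 0, 0, (((1-ε)^2/2 : ℝ) : ℂ)]

/-- a matrix with auxB4ᴴ * auxB4 = auxS4 -/
noncomputable def auxB4 (ε : ℝ) : Matrix (Fin 4) (Fin 4) ℂ :=
  !![((Real.sqrt ((1+ε^2)/2) : ℝ) : ℂ), 0, 0, 0;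
     0, ((Real.sqrt ((1-ε^2)/4) : ℝ) : ℂ), ((Real.sqrt ((1-ε^2)/4) : ℝ) : ℂ), 0;
     0, ((Real.sqrt ((1-ε)^2/4) : ℝ) : ℂ), -((Real.sqrt ((1-ε)^2/4) : ℝ) : ℂ), 0;
     0, 0, 0, ((Real.sqrt ((1-ε)^2/2) : ℝ) : ℂ)]

set_option maxHeartbeats 1000000 in
lemma aux_rho_eq (ε : ℝ) (hε0 : 0 ≤ ε) (hε1 : ε ≤ 1)
    (K : Fin 2 → Matrix (Fin 2) (Fin 2) ℂ)
    (hK0 : K 0 = !![1, 0; 0, ((Real.sqrt (1 - ε) : ℝ) : ℂ)])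
    (hK1 : K 1 = !![0, ((Real.sqrt ε : ℝ) : ℂ); 0, 0]) :
    (∑ a : Fin 2, ∑ b : Fin 2, (K a ⊗ₖ K b) * bell * (K a ⊗ₖ K b)ᴴ)
      = (auxR4 ε).submatrix auxE auxE := by
  have h1ε : (0:ℝ) ≤ 1 - ε := by linarith
  have hu : ((Real.sqrt ε : ℝ) : ℂ)^2 = (ε:ℂ) := by
    rw [← Complex.ofReal_pow, Real.sq_sqrt hε0]
  have hv : ((Real.sqrt (1-ε) : ℝ) : ℂ)^2 = 1 - (ε:ℂ) := by
    rw [← Complex.ofReal_pow, Real.sq_sqrt h1ε]; push_cast; ring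
  ext ⟨i, j⟩ ⟨k, l⟩
  fin_cases i <;> fin_cases j <;> fin_cases k <;> fin_cases l <;>
    simp [hK0, hK1, bell, auxR4, Matrix.mul_apply, Matrix.kroneckerMap_apply,
        Fintype.sum_prod_type, Fin.sum_univ_succ, Matrix.conjTranspose_apply,
        Matrix.vecHead, Matrix.vecTail]
  all_goals push_cast
  all_goals first
    | linear_combination (((Real.sqrt ε : ℝ) : ℂ)^2 + (ε:ℂ))/2 * hu
    | linear_combination hv/2
    | linear_combination (((Real.sqrt (1-ε):ℝ):ℂ)^2/2) * hu + ((ε:ℂ)/2) * hv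
    | linear_combination ((((Real.sqrt (1-ε):ℝ):ℂ)^2 + 1 - (ε:ℂ))/2) * hv

lemma aux_ptB_rho (ε : ℝ) (ρ : Matrix (Fin 2 × Fin 2) (Fin 2 × Fin 2) ℂ)
    (h : ρ = (auxR4 ε).submatrix auxE auxE) :
    ptB ρ = (auxA4 ε).submatrix auxE auxE := by
  subst h
  ext ⟨i, j⟩ ⟨k, l⟩
  fin_cases i <;> fin_cases j <;> fin_cases k <;> fin_cases l <;>
    simp [ptB, auxR4, auxA4, Matrix.vecHead, Matrix.vecTail]

lemma aux_A4_herm (ε : ℝ) : (auxA4 ε).IsHermitian := by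
  show _ᴴ = _
  ext i j
  fin_cases i <;> fin_cases j <;>
    simp [auxA4, Matrix.conjTranspose_apply, Matrix.vecHead, Matrix.vecTail]

lemma aux_det4 (x c0 d e c3 : ℂ) :
    Matrix.det (x • (1 : Matrix (Fin 4) (Fin 4) ℂ) - !![c0,0,0,0;0,d,e,0;0,e,d,0;0,0,0,c3])
      = (x - c0) * ((x - (d+e)) * ((x - (d-e)) * (x - c3))) := by
  have h : x • (1 : Matrix (Fin 4) (Fin 4) ℂ) - !![c0,0,0,0;0,d,e,0;0,e,d,0;0,0,0,c3]
      = !![x-c0,0,0,0; 0, x-d, -e, 0; 0, -e, x-d, 0; 0,0,0,x-c3] := by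
    ext i j
    fin_cases i <;> fin_cases j <;>
      simp [Matrix.one_apply, Matrix.vecHead, Matrix.vecTail]
  rw [h]
  simp only [Matrix.det_succ_row_zero, Fin.sum_univ_succ, Finset.univ_eq_empty,
    Finset.sum_empty, Fin.sum_univ_zero, Matrix.submatrix_apply, Matrix.det_fin_one]
  norm_num [Matrix.vecHead, Matrix.vecTail, Fin.succ, -mul_eq_mul_left_iff]
  ring

lemma aux_mul4 (ε : ℝ) : auxA4 ε * auxA4 ε = auxS4 ε * auxS4 ε := by
  ext i j
  fin_cases i <;> fin_cases j <;>
    simp [auxA4, auxS4, Matrix.mul_apply, Fin.sum_univ_succ,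
      Matrix.vecHead, Matrix.vecTail]
  all_goals (push_cast; ring)

lemma aux_BB (ε r1 r2 r3 r4 : ℝ)
    (c1 : ((r1:ℝ):ℂ)^2 = ((1:ℂ)+(ε:ℂ)^2)/2) (c2 : ((r2:ℝ):ℂ)^2 = ((1:ℂ)-(ε:ℂ)^2)/4)
    (c3 : ((r3:ℝ):ℂ)^2 = ((1:ℂ)-(ε:ℂ))^2/4) (c4 : ((r4:ℝ):ℂ)^2 = ((1:ℂ)-(ε:ℂ))^2/2) :
    (!![((r1:ℝ):ℂ), 0, 0, 0;
       0, ((r2:ℝ):ℂ), ((r2:ℝ):ℂ), 0;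
       0, ((r3:ℝ):ℂ), -((r3:ℝ):ℂ), 0;
       0, 0, 0, ((r4:ℝ):ℂ)])ᴴ *
    (!![((r1:ℝ):ℂ), 0, 0, 0;
       0, ((r2:ℝ):ℂ), ((r2:ℝ):ℂ), 0;
       0, ((r3:ℝ):ℂ), -((r3:ℝ):ℂ), 0;
       0, 0, 0, ((r4:ℝ):ℂ)]) = auxS4 ε := by
  ext i j
  fin_cases i <;> fin_cases j <;>
    simp [auxS4, Matrix.mul_apply, Fin.sum_univ_succ,
      Matrix.conjTranspose_apply, Matrix.vecHead, Matrix.vecTail]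
  all_goals push_cast
  all_goals first
    | linear_combination c1
    | linear_combination c4
    | linear_combination c2 + c3
    | linear_combination c2 - c3
    | linear_combination -c2 - c3
    | linear_combination -c2 + c3
    | linear_combination c3 - c2

lemma aux_B4_mul (ε : ℝ) (hε0 : 0 ≤ ε) (hε1 : ε ≤ 1) :
    (auxB4 ε)ᴴ * auxB4 ε = auxS4 ε := by
  have h2' : (0:ℝ) ≤ (1-ε^2)/4 := by nlinarith
  refine aux_BB ε _ _ _ _ ?_ ?_ ?_ ?_ <;>
    rw [← Complex.ofReal_pow, Real.sq_sqrt (by positivity)] <;> push_cast <;> ring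

open scoped MatrixOrder in
lemma aux_traceNorm_eq {n : Type*} [Fintype n] [DecidableEq n] (A S : Matrix n n ℂ)
    (hS : S.PosSemidef) (h : Aᴴ * A = S ^ 2) : traceNorm A = (S.trace).re := by
  have hH' := (Matrix.posSemidef_conjTranspose_mul_self A).1
  have e1 : cfc Real.sqrt (Aᴴ * A) = S := by
    rw [← cfcₙ_eq_cfc, ← CFC.sqrt_eq_real_sqrt _ (Matrix.posSemidef_conjTranspose_mul_self A).nonneg]
    exact CFC.sqrt_unique (by rw [h, pow_two]) hS.nonneg
  rw [traceNorm, ← e1, (Matrix.posSemidef_conjTranspose_mul_self A).1.cfc_eq]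
  rfl

set_option maxHeartbeats 1000000 in
/-- for the Bell state under amplitude damping on each qubit,
ρ = (E⊗E)(|Φ⟩⟨Φ|), the partial transpose ρ^{T_B} has eigenvalues (1+ε²)/2, (1−ε)²/2,
(1−ε²)/2 and −(1−ε)²/2, so E_N(ρ) = log₂[1 + (1−ε)²]. -/
theorem bell_amplitude_damping_negativity (ε : ℝ) (hε0 : 0 ≤ ε) (hε1 : ε ≤ 1)
    (K : Fin 2 → Matrix (Fin 2) (Fin 2) ℂ)
    (hK0 : K 0 = !![1, 0; 0, ((Real.sqrt (1 - ε) : ℝ) : ℂ)])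
    (hK1 : K 1 = !![0, ((Real.sqrt ε : ℝ) : ℂ); 0, 0])
    (ρ : Matrix (Fin 2 × Fin 2) (Fin 2 × Fin 2) ℂ)
    (hρ : ρ = ∑ a : Fin 2, ∑ b : Fin 2,
        (K a ⊗ₖ K b) * bell * (K a ⊗ₖ K b)ᴴ) :
    ∃ hH : (ptB ρ).IsHermitian,
      (Finset.univ.val.map hH.eigenvalues : Multiset ℝ)
          = {(1 + ε ^ 2) / 2, (1 - ε) ^ 2 / 2, (1 - ε ^ 2) / 2, -((1 - ε) ^ 2 / 2)}
        ∧ Real.logb 2 (traceNorm (ptB ρ)) = Real.logb 2 (1 + (1 - ε) ^ 2) := by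
  have hρ4 : ρ = (auxR4 ε).submatrix auxE auxE := by
    rw [hρ]; exact aux_rho_eq ε hε0 hε1 K hK0 hK1
  have hA : ptB ρ = (auxA4 ε).submatrix auxE auxE := aux_ptB_rho ε ρ hρ4
  have hH : (ptB ρ).IsHermitian := by
    rw [hA]; exact (aux_A4_herm ε).submatrix _
  refine ⟨hH, ?_, ?_⟩
  · -- eigenvalues
    -- the characteristic product identity
    have key : ∀ x : ℂ, ∏ i : Fin 2 × Fin 2, (x - ((hH.eigenvalues i : ℝ) : ℂ))
        = (x - (((1 + ε ^ 2) / 2 : ℝ) : ℂ)) * ((x - (((1 - ε) ^ 2 / 2 : ℝ) : ℂ)) *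
          ((x - (((1 - ε ^ 2) / 2 : ℝ) : ℂ)) * (x - ((-((1 - ε) ^ 2 / 2) : ℝ) : ℂ)))) := by
      intro x
      set U : Matrix (Fin 2 × Fin 2) (Fin 2 × Fin 2) ℂ :=
        (hH.eigenvectorUnitary : Matrix (Fin 2 × Fin 2) (Fin 2 × Fin 2) ℂ) with hUdef
      have hUU : U * star U = 1 := Matrix.mem_unitaryGroup_iff.mp hH.eigenvectorUnitary.2
      have hUU' : star U * U = 1 := Matrix.mem_unitaryGroup_iff'.mp hH.eigenvectorUnitary.2
      have h1 : x • (1 : Matrix (Fin 2 × Fin 2) (Fin 2 × Fin 2) ℂ) - ptB ρ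
          = U * (x • 1 - Matrix.diagonal (RCLike.ofReal ∘ hH.eigenvalues)) * star U := by
        rw [Matrix.mul_sub, Matrix.sub_mul]
        congr 1
        · rw [Matrix.mul_smul, Matrix.mul_one, Matrix.smul_mul, hUU]
        · exact hH.spectral_theorem
      have h2 : (x • (1 : Matrix (Fin 2 × Fin 2) (Fin 2 × Fin 2) ℂ) - ptB ρ).det
          = (x • (1 : Matrix (Fin 2 × Fin 2) (Fin 2 × Fin 2) ℂ)
            - Matrix.diagonal (RCLike.ofReal ∘ hH.eigenvalues)).det := by
        rw [h1, Matrix.det_mul, Matrix.det_mul, mul_comm, ← mul_assoc, ← Matrix.det_mul,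
          hUU', Matrix.det_one, one_mul]
      have h3 : x • (1 : Matrix (Fin 2 × Fin 2) (Fin 2 × Fin 2) ℂ)
            - Matrix.diagonal (RCLike.ofReal ∘ hH.eigenvalues)
          = Matrix.diagonal (fun i => x - ((hH.eigenvalues i : ℝ) : ℂ)) := by
        rw [Matrix.smul_one_eq_diagonal, ← Matrix.diagonal_sub]
        rfl
      have h4 : (x • (1 : Matrix (Fin 2 × Fin 2) (Fin 2 × Fin 2) ℂ) - ptB ρ).det
          = ∏ i : Fin 2 × Fin 2, (x - ((hH.eigenvalues i : ℝ) : ℂ)) := by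
        rw [h2, h3, Matrix.det_diagonal]
      rw [← h4, hA]
      have h5 : x • (1 : Matrix (Fin 2 × Fin 2) (Fin 2 × Fin 2) ℂ)
            - (auxA4 ε).submatrix auxE auxE
          = (x • 1 - auxA4 ε).submatrix auxE auxE := by
        ext p q
        simp [Matrix.submatrix_apply, Matrix.one_apply, Equiv.apply_eq_iff_eq]
      rw [h5, Matrix.det_submatrix_equiv_self]
      rw [show auxA4 ε = !![(((1+ε^2)/2 : ℝ) : ℂ), 0, 0, 0;
          0, ((ε*(1-ε)/2 : ℝ) : ℂ), (((1-ε)/2 : ℝ) : ℂ), 0;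
          0, (((1-ε)/2 : ℝ) : ℂ), ((ε*(1-ε)/2 : ℝ) : ℂ), 0;
          0, 0, 0, (((1-ε)^2/2 : ℝ) : ℂ)] from rfl, aux_det4]
      push_cast
      ring
    refine Multiset.map_injective (f := fun r : ℝ => (r : ℂ)) Complex.ofReal_injective ?_
    have hpoly : (Multiset.map (fun a : ℂ => Polynomial.X - Polynomial.C a)
          (Finset.univ.val.map (fun i => ((hH.eigenvalues i : ℝ) : ℂ)))).prod
        = (Multiset.map (fun a : ℂ => Polynomial.X - Polynomial.C a)
          ({(((1 + ε ^ 2) / 2 : ℝ) : ℂ), (((1 - ε) ^ 2 / 2 : ℝ) : ℂ),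
            (((1 - ε ^ 2) / 2 : ℝ) : ℂ), ((-((1 - ε) ^ 2 / 2) : ℝ) : ℂ)} : Multiset ℂ)).prod := by
      apply Polynomial.funext
      intro x
      rw [Polynomial.eval_multiset_prod, Polynomial.eval_multiset_prod,
        Multiset.map_map, Multiset.map_map]
      simp only [Function.comp, Polynomial.eval_sub, Polynomial.eval_X, Polynomial.eval_C]
      rw [← Finset.prod_eq_multiset_prod]
      rw [key x]
      simp [Multiset.prod_cons]
      try ring
    have hroots := congrArg Polynomial.roots hpoly
    rw [Polynomial.roots_multiset_prod_X_sub_C, Polynomial.roots_multiset_prod_X_sub_C] at hroots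
    simpa [Multiset.map_map, Function.comp] using hroots
  · -- trace norm
    have hS_psd : ((auxS4 ε).submatrix auxE auxE).PosSemidef := by
      have hBS : ((auxB4 ε).submatrix auxE auxE)ᴴ * ((auxB4 ε).submatrix auxE auxE)
          = (auxS4 ε).submatrix auxE auxE := by
        rw [Matrix.conjTranspose_submatrix, Matrix.submatrix_mul_equiv, aux_B4_mul ε hε0 hε1]
      rw [← hBS]
      exact Matrix.posSemidef_conjTranspose_mul_self _
    have hsq : (ptB ρ)ᴴ * ptB ρ = ((auxS4 ε).submatrix auxE auxE) ^ 2 :=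
      calc (ptB ρ)ᴴ * ptB ρ = (auxA4 ε * auxA4 ε).submatrix auxE auxE := by
            rw [show (ptB ρ)ᴴ = ptB ρ from hH, hA, Matrix.submatrix_mul_equiv]
        _ = (auxS4 ε * auxS4 ε).submatrix auxE auxE := by rw [aux_mul4]
        _ = ((auxS4 ε).submatrix auxE auxE) ^ 2 := by
            rw [pow_two, Matrix.submatrix_mul_equiv]
    have hsqrt : traceNorm (ptB ρ) = ((auxS4 ε).submatrix auxE auxE).trace.re :=
      aux_traceNorm_eq _ _ hS_psd hsq
    have htr : traceNorm (ptB ρ) = 1 + (1 - ε) ^ 2 := by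
      rw [hsqrt]
      have htr2 : ((auxS4 ε).submatrix auxE auxE).trace = ((1 + (1 - ε) ^ 2 : ℝ) : ℂ) := by
        simp [Matrix.trace, Matrix.diag, auxS4, Fintype.sum_prod_type, Fin.sum_univ_succ,
          Matrix.vecHead, Matrix.vecTail]
        push_cast
        ring
      rw [htr2, Complex.ofReal_re]
    rw [htr]
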